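/- arXiv:2005.06354 — 2 statements merged into one kernel-verified Lean document; each statement's English description precedes it below -/
import Mathlib

section
/- For every n ≥ 2 and every k ≥ 0, the number of 2-arrangements a of [n−1] whose permutation form avoids the pattern 321 and satisfies des(a) = k equals the number of 321-avoiding permutations of [n] having exactly k peaks. -/
open scoped Classical

namespace KArr

/-- Positive reduction of a word over ℤ: each positive letter is replaced by its
rank among the distinct positive letters of the word; negative letters unchanged. -/
def posReduce (w : List ℤ) : List ℤ :=
  w.map fun x => if 0 < x then ((w.toFinset.filter fun y => 0 < y ∧ y ≤ x).card : ℤ) else x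

/-- The set of descents of a word (1-indexed: `i` is a descent iff `w_i > w_{i+1}`). -/
def desSet (w : List ℤ) : Finset ℕ :=
  (Finset.range w.length).filter fun i => 1 ≤ i ∧ w.getD i 0 < w.getD (i - 1) 0

/-- The number of descents of a word. -/
def desNum (w : List ℤ) : ℕ := (desSet w).card

/-- The subword of positive letters. -/
def posPart (w : List ℤ) : List ℤ := w.filter fun x => decide (0 < x)

/-- A `k`-arrangement of `[n]`: a permutation together with a color in `Fin k`
attached to each fixed point (encoded as a total coloring that is `0` off the
fixed points). -/
abbrev Arrangement (n k : ℕ) :=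
  {x : Equiv.Perm (Fin n) × (Fin n → Fin k) // ∀ j, x.1 j ≠ j → (x.2 j : ℕ) = 0}

/-- The derangement form of a `k`-arrangement: replace each fixed point by the
negative letter recording its color, then positively reduce.  (Color `c : Fin k`
encodes the letter `¬(c+1) = -(c+1)`.) -/
def dfWord {n k : ℕ} (a : Arrangement n k) : List ℤ :=
  posReduce <| (List.finRange n).map fun i =>
    if a.1.1 i = i then -(((a.1.2 i : ℕ) : ℤ) + 1) else ((a.1.1 i : ℕ) : ℤ) + 1

/-- The permutation form of a `k`-arrangement: replace each fixed point whose
color is not `¬k` by the corresponding negative letter, then positively reduce. -/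
def pfWord {n k : ℕ} (a : Arrangement n k) : List ℤ :=
  posReduce <| (List.finRange n).map fun i =>
    if a.1.1 i = i ∧ (a.1.2 i : ℕ) + 1 ≠ k then -(((a.1.2 i : ℕ) : ℤ) + 1)
    else ((a.1.1 i : ℕ) : ℤ) + 1

/-- `fix_i(a)`: the number of fixed points of the base permutation with color `c`. -/
noncomputable def fixCount {n k : ℕ} (a : Arrangement n k) (c : Fin k) : ℕ :=
  Nat.card {i : Fin n // a.1.1 i = i ∧ a.1.2 i = c}

/-- `DEZ(a)`, the descent set of the derangement form. -/
def DEZset {n k : ℕ} (a : Arrangement n k) : Finset ℕ := desSet (dfWord a)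

/-- `DES(a)`, the descent set of the permutation form. -/
def DESset {n k : ℕ} (a : Arrangement n k) : Finset ℕ := desSet (pfWord a)

/-- `dez(a)`, the number of descents of the derangement form. -/
def dez {n k : ℕ} (a : Arrangement n k) : ℕ := desNum (dfWord a)

/-- `des(a)`, the number of descents of the permutation form. -/
def des {n k : ℕ} (a : Arrangement n k) : ℕ := desNum (pfWord a)

/-- `Der(a)`, the derangement part: the positive subword of the derangement form. -/
def Der {n k : ℕ} (a : Arrangement n k) : List ℤ := posPart (dfWord a)

/-- One-line notation of a permutation of `[n]`, as a word over `ℤ` with letters `1,…,n`. -/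
def oneLine {n : ℕ} (π : Equiv.Perm (Fin n)) : List ℤ :=
  (List.finRange n).map fun i => ((π i : ℕ) : ℤ) + 1

/-- A word `w` contains the pattern `p` if some subsequence of `w` of the same
length as `p` is order-isomorphic to `p` (entrywise strict inequalities match). -/
def Contains (w p : List ℤ) : Prop :=
  ∃ s : List ℤ, s.Sublist w ∧ s.length = p.length ∧
    ∀ i j, i < p.length → j < p.length →
      (s.getD i 0 < s.getD j 0 ↔ p.getD i 0 < p.getD j 0)

/-- A word avoids a pattern if it does not contain it. -/
def Avoids (w p : List ℤ) : Prop := ¬ Contains w p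


/-- `dez`-word of a permutation: replace each fixed point by `¬1 = -1`,
then positively reduce (the `1`-arrangement derangement form). -/
def dzWordPerm {n : ℕ} (π : Equiv.Perm (Fin n)) : List ℤ :=
  posReduce <| (List.finRange n).map fun i =>
    if π i = i then (-1 : ℤ) else ((π i : ℕ) : ℤ) + 1

/-- The weak derangement part `Der_k(a)`: the derangement form with all letters `¬k` removed. -/
def wDer {n k : ℕ} (a : Arrangement n k) : List ℤ :=
  (dfWord a).filter fun x => decide (x ≠ -(k : ℤ))

/-- For a word `w` which is a derangement form, position `j` (0-indexed) of `w` is an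
excedance of the base permutation iff the letter is positive and exceeds the number
of positive letters among the first `j+1` letters. -/
def isExcAt (w : List ℤ) (j : ℕ) : Prop :=
  ((((w.take (j + 1)).filter fun x => decide (0 < x)).length : ℤ)) < w.getD j 0

/-- `e_i = E` for the (1-indexed) letter positions `0 ≤ i ≤ m+1` of `w`, with the
boundary conventions `e_0 = e_{m+1} = E`. -/
def slotE (w : List ℤ) (i : ℕ) : Prop :=
  i = 0 ∨ i = w.length + 1 ∨ isExcAt w (i - 1)

/-- `w_i > w_{i+1}` (1-indexed letters) with the conventions `w_0 = w_{m+1} = +∞`;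
this is the descent condition attached to slot `i`, `0 ≤ i ≤ m`. -/
def slotGt (w : List ℤ) (i : ℕ) : Prop :=
  i = 0 ∨ (i < w.length ∧ w.getD i 0 < w.getD (i - 1) 0)

/-- Slot `i` is of type I: `w_i > w_{i+1}` and `(e_i, e_{i+1}) = (E, N)`. -/
def typeI (w : List ℤ) (i : ℕ) : Prop := slotGt w i ∧ slotE w i ∧ ¬ slotE w (i + 1)

/-- Slot `i` is of type II: `w_i ≤ w_{i+1}` and `(e_i, e_{i+1}) = (N, E)`. -/
def typeII (w : List ℤ) (i : ℕ) : Prop := ¬ slotGt w i ∧ ¬ slotE w i ∧ slotE w (i + 1)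

/-- Slot `i` is of type III: `w_i ≤ w_{i+1}` and `(e_i, e_{i+1}) ≠ (N, E)`. -/
def typeIII (w : List ℤ) (i : ℕ) : Prop := ¬ slotGt w i ∧ ¬ (¬ slotE w i ∧ slotE w (i + 1))

/-- Slot `i` is of type IV: `w_i > w_{i+1}` and `(e_i, e_{i+1}) ≠ (E, N)`. -/
def typeIV (w : List ℤ) (i : ℕ) : Prop := slotGt w i ∧ ¬ (slotE w i ∧ ¬ slotE w (i + 1))

/-- The length `s_i` of the `i`-th slot of the word `u` (a derangement form),
where the slot letters are the letters equal to `c` (`= ¬k`). -/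
def slotLen (u : List ℤ) (c : ℤ) (i : ℕ) : ℕ :=
  let L := (List.range u.length).filter fun j => decide (u.getD j 0 ≠ c)
  (if i < L.length then L.getD i 0 else u.length) - (if i = 0 then 0 else L.getD (i - 1) 0 + 1)

/-- The number of peaks of a word: indices `i` (1-indexed, `2 ≤ i ≤ n-1`)
with `w_{i-1} < w_i > w_{i+1}`. -/
def peakNum (w : List ℤ) : ℕ :=
  ((List.range w.length).filter fun i => decide (0 < i ∧ i + 1 < w.length ∧
    w.getD (i - 1) 0 < w.getD i 0 ∧ w.getD (i + 1) 0 < w.getD i 0)).length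

/-- Number of fixed points of a permutation. -/
noncomputable def fixNum {n : ℕ} (π : Equiv.Perm (Fin n)) : ℕ :=
  Nat.card {i : Fin n // π i = i}

/-- Number of excedances of a permutation. -/
noncomputable def excNum {n : ℕ} (π : Equiv.Perm (Fin n)) : ℕ :=
  Nat.card {i : Fin n // i < π i}

/-- Number of anti-excedances of a permutation. -/
noncomputable def aexcNum {n : ℕ} (π : Equiv.Perm (Fin n)) : ℕ :=
  Nat.card {i : Fin n // π i < i}

/-- `ldes` of a word: the smallest `i` which is a descent or equals the length
(0 for the empty word). -/
def ldesW (w : List ℤ) : ℕ :=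
  (((List.range (w.length + 1)).filter fun i =>
    decide ((1 ≤ i ∧ i < w.length ∧ w.getD i 0 < w.getD (i - 1) 0) ∨ i = w.length))).headD 0

/-- `rdes` of a word: the length minus the position of the rightmost descent
(`sSup ∅ = 0` when there is no descent). -/
def rdesW (w : List ℤ) : ℕ :=
  w.length - ((List.range w.length).filter fun i =>
    decide (1 ≤ i ∧ w.getD i 0 < w.getD (i - 1) 0)).foldr max 0

/-- Number of crossing descents of a permutation: (1-indexed) descents `i` with
`σ(i) ≥ i+1 ≥ σ(i+1)`. -/
def xdesW (w : List ℤ) : ℕ :=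
  ((List.range w.length).filter fun i : ℕ =>
    decide (1 ≤ i ∧ (i : ℤ) + 1 ≤ w.getD (i - 1) 0 ∧ w.getD i 0 ≤ (i : ℤ) + 1)).length

/-- Number of crossing descents of a permutation. -/
def xdesNum {n : ℕ} (σ : Equiv.Perm (Fin n)) : ℕ := xdesW (oneLine σ)

/-- A height sequence `d` encodes a Dyck path: it is weakly increasing and `d_i ≤ i - 1`
(1-indexed), i.e. `d.getD i 0 ≤ i` (0-indexed). -/
def IsDyck (d : List ℕ) : Prop :=
  List.Pairwise (· ≤ ·) d ∧ ∀ i < d.length, d.getD i 0 ≤ i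

/-- Number of hills of a Dyck path: east steps of height equal to their index that
touch the diagonal and are immediately followed by a north step. -/
def hillNum (d : List ℕ) : ℕ :=
  ((List.range d.length).filter fun i => decide (d.getD i 0 = i ∧
    (i + 1 = d.length ∨ d.getD i 0 < d.getD (i + 1) 0))).length

/-- Number of segments of a Dyck path: maximal runs of at least two consecutive
equal heights (counted by their starting index). -/
def segNum (d : List ℕ) : ℕ :=
  ((List.range d.length).filter fun i => decide (i + 1 < d.length ∧
    d.getD i 0 = d.getD (i + 1) 0 ∧ (i = 0 ∨ d.getD (i - 1) 0 ≠ d.getD i 0))).length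

/-- `lseg`: the (1-indexed) position of the last step of the leftmost segment,
or `n+1` if there is no segment. -/
def lsegNum (d : List ℕ) : ℕ :=
  (((List.range (d.length + 2)).filter fun i =>
    decide ((2 ≤ i ∧ i ≤ d.length ∧ d.getD (i - 2) 0 = d.getD (i - 1) 0 ∧
      (i = d.length ∨ d.getD (i - 1) 0 ≠ d.getD i 0)) ∨ i = d.length + 1))).headD 0

/-- Dyck paths of semilength `n`, encoded as monotone functions `Fin n → Fin (n+1)`
bounded by the diagonal (their height sequences). -/
def DyckFinset (n : ℕ) : Finset (Fin n → Fin (n + 1)) :=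
  Finset.univ.filter fun f =>
    (∀ i j : Fin n, i ≤ j → f i ≤ f j) ∧ ∀ i : Fin n, (f i : ℕ) ≤ (i : ℕ)

/-- The height sequence of a function `Fin n → Fin (n+1)` as a list. -/
def hList {n : ℕ} (f : Fin n → Fin (n + 1)) : List ℕ :=
  (List.finRange n).map fun i => (f i : ℕ)


/-! ### Auxiliary lemmas -/

lemma contains321_iff (w : List ℤ) :
    Contains w [3, 2, 1] ↔ ∃ i j l : ℕ, i < j ∧ j < l ∧ l < w.length ∧
      w.getD l 0 < w.getD j 0 ∧ w.getD j 0 < w.getD i 0 := by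
  constructor
  · rintro ⟨s, hsub, hlen, hord⟩
    have h3 : s.length = 3 := by simpa using hlen
    obtain ⟨f, hf⟩ := List.sublist_iff_exists_fin_orderEmbedding_get_eq.mp hsub
    have hget : ∀ (x : ℕ) (hx : x < s.length), s.getD x 0 = s.get ⟨x, hx⟩ := by
      intro x hx
      rw [List.getD_eq_getElem _ _ hx]; rfl
    have h10 : s.getD 1 0 < s.getD 0 0 := by
      have := (hord 1 0 (by norm_num) (by norm_num)).mpr (by norm_num [List.getD])
      exact this
    have h21 : s.getD 2 0 < s.getD 1 0 := by
      have := (hord 2 1 (by norm_num) (by norm_num)).mpr (by norm_num [List.getD])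
      exact this
    have l0 : (0 : ℕ) < s.length := by omega
    have l1 : (1 : ℕ) < s.length := by omega
    have l2 : (2 : ℕ) < s.length := by omega
    refine ⟨f ⟨0, l0⟩, f ⟨1, l1⟩, f ⟨2, l2⟩, ?_, ?_, (f ⟨2, l2⟩).2, ?_, ?_⟩
    · exact f.strictMono (by simp [Fin.lt_def])
    · exact f.strictMono (by simp [Fin.lt_def])
    · rw [List.getD_eq_getElem _ _ (f ⟨2, l2⟩).2, List.getD_eq_getElem _ _ (f ⟨1, l1⟩).2]
      have e2 := hf ⟨2, l2⟩
      have e1 := hf ⟨1, l1⟩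
      rw [hget 2 l2, hget 1 l1] at h21
      rw [e2, e1] at h21
      exact h21
    · rw [List.getD_eq_getElem _ _ (f ⟨1, l1⟩).2, List.getD_eq_getElem _ _ (f ⟨0, l0⟩).2]
      have e1 := hf ⟨1, l1⟩
      have e0 := hf ⟨0, l0⟩
      rw [hget 1 l1, hget 0 l0] at h10
      rw [e1, e0] at h10
      exact h10
  · rintro ⟨i, j, l, hij, hjl, hl, h1, h2⟩
    have hi : i < w.length := by omega
    have hj : j < w.length := by omega
    refine ⟨[w.getD i 0, w.getD j 0, w.getD l 0], ?_, by simp, ?_⟩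
    · rw [List.sublist_iff_exists_fin_orderEmbedding_get_eq]
      have hmono : StrictMono (fun x : Fin ([w.getD i 0, w.getD j 0, w.getD l 0].length) =>
          if (x : ℕ) = 0 then (⟨i, hi⟩ : Fin w.length) else if (x : ℕ) = 1 then ⟨j, hj⟩
          else ⟨l, hl⟩) := by
        intro a b hab
        fin_cases a <;> fin_cases b <;>
          simp_all [Fin.lt_def] <;> omega
      refine ⟨OrderEmbedding.ofStrictMono _ hmono, ?_⟩
      intro ix
      fin_cases ix <;>
        simp [OrderEmbedding.ofStrictMono, List.getD_eq_getElem, hi, hj, hl] <;>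
        rw [List.getD_eq_getElem _ _ (by assumption)] <;> rfl
    · intro x y hx hy
      simp only [List.length_cons, List.length_nil] at hx hy
      generalize hA : w.getD i 0 = A at *
      generalize hB : w.getD j 0 = B at *
      generalize hC : w.getD l 0 = C at *
      interval_cases x <;> interval_cases y <;>
        simp [List.getD] <;> omega

lemma desSet_congr {v w : List ℤ} (hl : v.length = w.length)
    (h : ∀ i j : ℕ, i < w.length → j < w.length →
      (v.getD i 0 < v.getD j 0 ↔ w.getD i 0 < w.getD j 0)) :
    desSet v = desSet w := by
  ext i
  simp only [desSet, Finset.mem_filter, Finset.mem_range]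
  constructor
  · rintro ⟨hi, h1, h2⟩
    rw [hl] at hi
    exact ⟨hi, h1, (h i (i - 1) hi (by omega)).mp h2⟩
  · rintro ⟨hi, h1, h2⟩
    exact ⟨by omega, h1, (h i (i - 1) hi (by omega)).mpr h2⟩

lemma contains321_congr {v w : List ℤ} (hl : v.length = w.length)
    (h : ∀ i j : ℕ, i < w.length → j < w.length →
      (v.getD i 0 < v.getD j 0 ↔ w.getD i 0 < w.getD j 0)) :
    (Contains v [3, 2, 1] ↔ Contains w [3, 2, 1]) := by
  rw [contains321_iff, contains321_iff]
  constructor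
  · rintro ⟨i, j, l, hij, hjl, hlen, h1, h2⟩
    rw [hl] at hlen
    exact ⟨i, j, l, hij, hjl, hlen,
      (h l j hlen (by omega)).mp h1, (h j i (by omega) (by omega)).mp h2⟩
  · rintro ⟨i, j, l, hij, hjl, hlen, h1, h2⟩
    exact ⟨i, j, l, hij, hjl, by omega,
      (h l j hlen (by omega)).mpr h1, (h j i (by omega) (by omega)).mpr h2⟩

/-- The reduction map of `posReduce`. -/
noncomputable def pr (w : List ℤ) (x : ℤ) : ℤ :=
  if 0 < x then ((w.toFinset.filter fun y => 0 < y ∧ y ≤ x).card : ℤ) else x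

lemma posReduce_length (w : List ℤ) : (posReduce w).length = w.length := by
  simp [posReduce]

lemma posReduce_getD {w : List ℤ} {i : ℕ} (hi : i < w.length) :
    (posReduce w).getD i 0 = pr w (w.getD i 0) := by
  unfold posReduce pr
  rw [List.getD_eq_getElem _ _ (by simpa using hi), List.getElem_map,
    List.getD_eq_getElem _ _ hi]

lemma pr_mono {w : List ℤ} {x y : ℤ} (hy : y ∈ w) (hxy : x < y) : pr w x < pr w y := by
  unfold pr
  by_cases hy0 : 0 < y
  · by_cases hx0 : 0 < x
    · simp only [if_pos hx0, if_pos hy0, Nat.cast_lt]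
      apply Finset.card_lt_card
      have hsub : (w.toFinset.filter fun z => 0 < z ∧ z ≤ x) ⊆
          (w.toFinset.filter fun z => 0 < z ∧ z ≤ y) := by
        apply Finset.monotone_filter_right
        intro z hz
        exact fun hz' => ⟨hz'.1, hz'.2.trans hxy.le⟩
      rw [Finset.ssubset_iff_of_subset hsub]
      refine ⟨y, ?_, ?_⟩
      · simp [Finset.mem_filter, List.mem_toFinset.mpr hy, hy0]
      · simp only [Finset.mem_filter, not_and]
        intro _ hcon
        omega
    · simp only [if_neg hx0, if_pos hy0]
      have hpos : 0 < (w.toFinset.filter fun z => 0 < z ∧ z ≤ y).card := by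
        apply Finset.card_pos.mpr
        exact ⟨y, by simp [Finset.mem_filter, List.mem_toFinset.mpr hy, hy0]⟩
      have : (1 : ℤ) ≤ ((w.toFinset.filter fun z => 0 < z ∧ z ≤ y).card : ℤ) := by
        exact_mod_cast hpos
      omega
  · have hx0 : ¬ 0 < x := by omega
    simp only [if_neg hx0, if_neg hy0]
    exact hxy

lemma pr_lt_iff {w : List ℤ} {x y : ℤ} (hx : x ∈ w) (hy : y ∈ w) :
    pr w x < pr w y ↔ x < y := by
  constructor
  · intro h
    by_contra hc
    push_neg at hc
    rcases eq_or_lt_of_le hc with he | hlt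
    · rw [he] at h; exact lt_irrefl _ h
    · exact absurd h (not_lt.mpr (pr_mono hx hlt).le)
  · exact pr_mono hy

lemma getD_mem {w : List ℤ} {i : ℕ} (hi : i < w.length) : w.getD i 0 ∈ w := by
  rw [List.getD_eq_getElem _ _ hi]
  exact List.getElem_mem _

lemma posReduce_ordIso (w : List ℤ) (i j : ℕ) (hi : i < w.length) (hj : j < w.length) :
    (posReduce w).getD i 0 < (posReduce w).getD j 0 ↔ w.getD i 0 < w.getD j 0 := by
  rw [posReduce_getD hi, posReduce_getD hj]
  exact pr_lt_iff (getD_mem hi) (getD_mem hj)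

lemma desNum_posReduce (w : List ℤ) : desNum (posReduce w) = desNum w := by
  unfold desNum
  rw [desSet_congr (posReduce_length w) (posReduce_ordIso w)]

lemma contains_posReduce (w : List ℤ) :
    Contains (posReduce w) [3, 2, 1] ↔ Contains w [3, 2, 1] := by
  exact contains321_congr (posReduce_length w) (posReduce_ordIso w)

/-! ### The word of an arrangement and the bijection to permutations -/

lemma finRange_map_getD {N : ℕ} (f : Fin N → ℤ) {x : ℕ} (hx : x < N) :
    (((List.finRange N).map f).getD x 0) = f ⟨x, hx⟩ := by
  rw [List.getD_eq_getElem _ _ (by simpa using hx), List.getElem_map]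
  congr 1
  simp

/-- The set of fixed points colored `¬1` (color `0`). -/
noncomputable def Tset {m : ℕ} (a : Arrangement m 2) : Finset (Fin m) :=
  Finset.univ.filter fun i => a.1.1 i = i ∧ a.1.2 i = 0

noncomputable def tOf {m : ℕ} (a : Arrangement m 2) : ℕ := (Tset a).card

noncomputable def Sset {m : ℕ} (a : Arrangement m 2) : Finset (Fin m) := (Tset a)ᶜ

lemma mem_Tset_iff {m : ℕ} (a : Arrangement m 2) (i : Fin m) :
    i ∈ Tset a ↔ a.1.1 i = i ∧ a.1.2 i = 0 := by simp [Tset]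

lemma tOf_le {m : ℕ} (a : Arrangement m 2) : tOf a ≤ m := by
  have := Finset.card_le_univ (Tset a)
  simpa [tOf] using this

lemma Scard {m : ℕ} (a : Arrangement m 2) : (Sset a).card = m - tOf a := by
  simp [Sset, Finset.card_compl, tOf]

lemma pi_mem_Sset {m : ℕ} (a : Arrangement m 2) {i : Fin m} (hi : i ∈ Sset a) :
    a.1.1 i ∈ Sset a := by
  rw [Sset, Finset.mem_compl] at hi ⊢
  intro hc
  rw [mem_Tset_iff] at hc
  have h3 : a.1.1 i = i := a.1.1.injective hc.1
  exact hi ((mem_Tset_iff a i).mpr ⟨h3, by rw [← h3]; exact hc.2⟩)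

/-- The unreduced permutation-form word. -/
def Wword {m : ℕ} (a : Arrangement m 2) : List ℤ :=
  (List.finRange m).map fun i =>
    if a.1.1 i = i ∧ (a.1.2 i : ℕ) + 1 ≠ 2 then -(((a.1.2 i : ℕ) : ℤ) + 1)
    else ((a.1.1 i : ℕ) : ℤ) + 1

lemma pfWord_eq {m : ℕ} (a : Arrangement m 2) : pfWord a = posReduce (Wword a) := rfl

lemma Wword_length {m : ℕ} (a : Arrangement m 2) : (Wword a).length = m := by simp [Wword]

lemma Wword_getD {m : ℕ} (a : Arrangement m 2) (i : Fin m) :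
    (Wword a).getD (i : ℕ) 0 =
      if i ∈ Tset a then (-1 : ℤ) else ((a.1.1 i : ℕ) : ℤ) + 1 := by
  unfold Wword
  rw [finRange_map_getD _ i.2]
  simp only [Fin.eta]
  by_cases hi : i ∈ Tset a
  · rw [mem_Tset_iff] at hi
    rw [if_pos ⟨hi.1, by rw [hi.2]; norm_num⟩, if_pos ((mem_Tset_iff a i).mpr hi), hi.2]
    norm_num
  · rw [if_neg, if_neg hi]
    rintro ⟨h1, h2⟩
    apply hi
    rw [mem_Tset_iff]
    have hlt := (a.1.2 i).2
    refine ⟨h1, ?_⟩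
    apply Fin.ext
    simp only [Fin.val_zero]
    omega

/-- Rank of a `T`-element. -/
noncomputable def rkT {m : ℕ} (a : Arrangement m 2) (i : Fin m) (hi : i ∈ Tset a) :
    Fin (tOf a) := ((Tset a).orderIsoOfFin rfl).symm ⟨i, hi⟩

/-- Rank of an `S`-element. -/
noncomputable def rkS {m : ℕ} (a : Arrangement m 2) (i : Fin m) (hi : i ∈ Sset a) :
    Fin ((Sset a).card) := ((Sset a).orderIsoOfFin rfl).symm ⟨i, hi⟩

lemma rkT_lt_iff {m : ℕ} (a : Arrangement m 2) {i j : Fin m} (hi : i ∈ Tset a)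
    (hj : j ∈ Tset a) : rkT a i hi < rkT a j hj ↔ i < j := by
  unfold rkT
  exact (((Tset a).orderIsoOfFin rfl).symm.lt_iff_lt).trans Subtype.mk_lt_mk

lemma rkS_lt_iff {m : ℕ} (a : Arrangement m 2) {i j : Fin m} (hi : i ∈ Sset a)
    (hj : j ∈ Sset a) : rkS a i hi < rkS a j hj ↔ i < j := by
  unfold rkS
  exact (((Sset a).orderIsoOfFin rfl).symm.lt_iff_lt).trans Subtype.mk_lt_mk

/-- The bijection on the function level: position `0` gets value `t`, `T`-positions get
their ranks (values `< t`), `S`-positions get `t + 1 +` the rank of the image. -/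
noncomputable def Ffun {m : ℕ} (a : Arrangement m 2) : Fin (m + 1) → Fin (m + 1) :=
  Fin.cases ⟨tOf a, Nat.lt_succ_of_le (tOf_le a)⟩
    (fun i =>
      if hi : i ∈ Tset a then
        ⟨(rkT a i hi : ℕ), by have := (rkT a i hi).2; have := tOf_le a; omega⟩
      else
        ⟨tOf a + 1 + (rkS a (a.1.1 i) (pi_mem_Sset a (Finset.mem_compl.mpr hi)) : ℕ), by
          have h2 := (rkS a (a.1.1 i) (pi_mem_Sset a (Finset.mem_compl.mpr hi))).2
          have h3 := Scard a
          have := tOf_le a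
          omega⟩)

lemma Ffun_zero {m : ℕ} (a : Arrangement m 2) : (Ffun a 0 : ℕ) = tOf a := by
  simp [Ffun]

lemma Ffun_succ_mem {m : ℕ} (a : Arrangement m 2) {i : Fin m} (hi : i ∈ Tset a) :
    (Ffun a i.succ : ℕ) = (rkT a i hi : ℕ) := by
  simp [Ffun, hi]

lemma Ffun_succ_not_mem {m : ℕ} (a : Arrangement m 2) {i : Fin m} (hi : i ∉ Tset a) :
    (Ffun a i.succ : ℕ) =
      tOf a + 1 + (rkS a (a.1.1 i) (pi_mem_Sset a (Finset.mem_compl.mpr hi)) : ℕ) := by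
  simp [Ffun, hi]

lemma Ffun_succ_lt_iff {m : ℕ} (a : Arrangement m 2) (i : Fin m) :
    (Ffun a i.succ : ℕ) < tOf a ↔ i ∈ Tset a := by
  by_cases hi : i ∈ Tset a
  · rw [Ffun_succ_mem a hi]
    exact ⟨fun _ => hi, fun _ => (rkT a i hi).2⟩
  · rw [Ffun_succ_not_mem a hi]
    constructor
    · intro h; omega
    · intro h; exact absurd h hi

lemma Ffun_injective {m : ℕ} (a : Arrangement m 2) : Function.Injective (Ffun a) := by
  intro x y h
  rcases Fin.eq_zero_or_eq_succ x with hx | ⟨i, rfl⟩ <;>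
    rcases Fin.eq_zero_or_eq_succ y with hy | ⟨j, rfl⟩
  · rw [hx, hy]
  · exfalso
    subst hx
    have h0 := Ffun_zero a
    have hval : (Ffun a 0 : ℕ) = (Ffun a j.succ : ℕ) := by rw [h]
    by_cases hj : j ∈ Tset a
    · have := Ffun_succ_mem a hj; have := (rkT a j hj).2; omega
    · have := Ffun_succ_not_mem a hj; omega
  · exfalso
    subst hy
    have h0 := Ffun_zero a
    have hval : (Ffun a i.succ : ℕ) = (Ffun a 0 : ℕ) := by rw [h]
    by_cases hi : i ∈ Tset a
    · have := Ffun_succ_mem a hi; have := (rkT a i hi).2; omega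
    · have := Ffun_succ_not_mem a hi; omega
  · have hval : (Ffun a i.succ : ℕ) = (Ffun a j.succ : ℕ) := by rw [h]
    by_cases hi : i ∈ Tset a <;> by_cases hj : j ∈ Tset a
    · rw [Ffun_succ_mem a hi, Ffun_succ_mem a hj] at hval
      have : rkT a i hi = rkT a j hj := Fin.ext hval
      have := congrArg (((Tset a).orderIsoOfFin rfl)) this
      simp only [rkT, OrderIso.apply_symm_apply] at this
      have : i = j := congrArg Subtype.val this
      rw [this]
    · exfalso
      rw [Ffun_succ_mem a hi, Ffun_succ_not_mem a hj] at hval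
      have := (rkT a i hi).2; omega
    · exfalso
      rw [Ffun_succ_not_mem a hi, Ffun_succ_mem a hj] at hval
      have := (rkT a j hj).2; omega
    · rw [Ffun_succ_not_mem a hi, Ffun_succ_not_mem a hj] at hval
      have hr : rkS a (a.1.1 i) (pi_mem_Sset a (Finset.mem_compl.mpr hi)) =
          rkS a (a.1.1 j) (pi_mem_Sset a (Finset.mem_compl.mpr hj)) := Fin.ext (by omega)
      have := congrArg (((Sset a).orderIsoOfFin rfl)) hr
      simp only [rkS, OrderIso.apply_symm_apply] at this
      have : a.1.1 i = a.1.1 j := congrArg Subtype.val this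
      have : i = j := a.1.1.injective this
      rw [this]

/-- The bijection, as a permutation of `Fin (m+1)`. -/
noncomputable def Fmap {m : ℕ} (a : Arrangement m 2) : Equiv.Perm (Fin (m + 1)) :=
  Equiv.ofBijective (Ffun a) (Finite.injective_iff_bijective.mp (Ffun_injective a))

lemma Fmap_apply {m : ℕ} (a : Arrangement m 2) (x : Fin (m + 1)) :
    Fmap a x = Ffun a x := rfl

lemma oneLine_length {N : ℕ} (σ : Equiv.Perm (Fin N)) : (oneLine σ).length = N := by
  simp [oneLine]

lemma oneLine_getD {N : ℕ} (σ : Equiv.Perm (Fin N)) {x : ℕ} (hx : x < N) :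
    (oneLine σ).getD x 0 = ((σ ⟨x, hx⟩ : ℕ) : ℤ) + 1 := by
  unfold oneLine
  rw [finRange_map_getD _ hx]

/-! ### Comparison lemmas -/

lemma oneLine_getD_succ {m : ℕ} (σ : Equiv.Perm (Fin (m + 1))) {x : ℕ} (hx : x < m) :
    (oneLine σ).getD (x + 1) 0 = ((σ (Fin.succ ⟨x, hx⟩) : ℕ) : ℤ) + 1 := by
  rw [oneLine_getD σ (show x + 1 < m + 1 by omega)]
  rfl

lemma keyCmp {m : ℕ} (a : Arrangement m 2) {i j : Fin m} (hij : i < j) :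
    (Wword a).getD (j : ℕ) 0 < (Wword a).getD (i : ℕ) 0 ↔
      (Ffun a j.succ : ℕ) < (Ffun a i.succ : ℕ) := by
  rw [Wword_getD, Wword_getD]
  by_cases hi : i ∈ Tset a <;> by_cases hj : j ∈ Tset a
  · rw [if_pos hi, if_pos hj, Ffun_succ_mem a hi, Ffun_succ_mem a hj]
    apply iff_of_false (lt_irrefl _)
    intro h
    have : rkT a j hj < rkT a i hi := h
    exact absurd ((rkT_lt_iff a hj hi).mp this) (by exact fun hc => absurd (hc.trans hij) (lt_irrefl _))
  · rw [if_pos hi, if_neg hj, Ffun_succ_mem a hi, Ffun_succ_not_mem a hj]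
    apply iff_of_false
    · intro h
      have : (0 : ℤ) ≤ ((a.1.1 j : ℕ) : ℤ) := by positivity
      omega
    · have := (rkT a i hi).2
      omega
  · rw [if_neg hi, if_pos hj, Ffun_succ_not_mem a hi, Ffun_succ_mem a hj]
    apply iff_of_true
    · have : (0 : ℤ) ≤ ((a.1.1 i : ℕ) : ℤ) := by positivity
      omega
    · have := (rkT a j hj).2
      omega
  · rw [if_neg hi, if_neg hj, Ffun_succ_not_mem a hi, Ffun_succ_not_mem a hj]
    have h2 := rkS_lt_iff a (pi_mem_Sset a (Finset.mem_compl.mpr hj))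
      (pi_mem_Sset a (Finset.mem_compl.mpr hi))
    constructor
    · intro h
      have hlt : a.1.1 j < a.1.1 i := by
        rw [Fin.lt_def]; omega
      have := h2.mpr hlt
      rw [Fin.lt_def] at this
      omega
    · intro h
      have hv : rkS a (a.1.1 j) (pi_mem_Sset a (Finset.mem_compl.mpr hj)) <
          rkS a (a.1.1 i) (pi_mem_Sset a (Finset.mem_compl.mpr hi)) := by
        rw [Fin.lt_def]; omega
      have := h2.mp hv
      rw [Fin.lt_def] at this
      omega

lemma keyCmpT {m : ℕ} (a : Arrangement m 2) {i j : Fin m} (hi : i ∈ Tset a)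
    (hj : j ∈ Tset a) (hij : i < j) : (Ffun a i.succ : ℕ) < (Ffun a j.succ : ℕ) := by
  rw [Ffun_succ_mem a hi, Ffun_succ_mem a hj]
  exact (rkT_lt_iff a hi hj).mpr hij

lemma contains_Wword_iff {m : ℕ} (a : Arrangement m 2) :
    Contains (Wword a) [3, 2, 1] ↔ Contains (oneLine (Fmap a)) [3, 2, 1] := by
  rw [contains321_iff, contains321_iff]
  constructor
  · rintro ⟨i, j, l, hij, hjl, hl, h1, h2⟩
    rw [Wword_length] at hl
    have hi : i < m := by omega
    have hj : j < m := by omega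
    refine ⟨i + 1, j + 1, l + 1, by omega, by omega, by rw [oneLine_length]; omega, ?_, ?_⟩
    · rw [oneLine_getD_succ _ hl, oneLine_getD_succ _ hj]
      have := (keyCmp a (show (⟨j, hj⟩ : Fin m) < ⟨l, hl⟩ from hjl)).mp h1
      rw [Fmap_apply, Fmap_apply]
      omega
    · rw [oneLine_getD_succ _ hj, oneLine_getD_succ _ hi]
      have := (keyCmp a (show (⟨i, hi⟩ : Fin m) < ⟨j, hj⟩ from hij)).mp h2
      rw [Fmap_apply, Fmap_apply]
      omega
  · rintro ⟨p, q, r, hpq, hqr, hr, h1, h2⟩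
    rw [oneLine_length] at hr
    have hq1 : q - 1 < m := by omega
    have hr1 : r - 1 < m := by omega
    have eq : (oneLine (Fmap a)).getD q 0 = ((Ffun a (Fin.succ ⟨q - 1, hq1⟩) : ℕ) : ℤ) + 1 := by
      conv_lhs => rw [show q = (q - 1) + 1 by omega]
      rw [oneLine_getD_succ _ hq1, Fmap_apply]
    have er : (oneLine (Fmap a)).getD r 0 = ((Ffun a (Fin.succ ⟨r - 1, hr1⟩) : ℕ) : ℤ) + 1 := by
      conv_lhs => rw [show r = (r - 1) + 1 by omega]
      rw [oneLine_getD_succ _ hr1, Fmap_apply]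
    rcases Nat.eq_zero_or_pos p with hp0 | hp1
    · exfalso
      subst hp0
      have e0 : (oneLine (Fmap a)).getD 0 0 = ((Ffun a 0 : ℕ) : ℤ) + 1 := by
        rw [oneLine_getD _ (show 0 < m + 1 by omega), Fmap_apply]
        rfl
      rw [e0, eq] at h2
      rw [eq, er] at h1
      have hQ : (⟨q - 1, hq1⟩ : Fin m) ∈ Tset a := by
        rw [← Ffun_succ_lt_iff a, ← Ffun_zero a]
        omega
      have hR : (⟨r - 1, hr1⟩ : Fin m) ∈ Tset a := by
        rw [← Ffun_succ_lt_iff a, ← Ffun_zero a]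
        omega
      have := keyCmpT a hQ hR (show (⟨q - 1, hq1⟩ : Fin m) < ⟨r - 1, hr1⟩ by
        simp only [Fin.mk_lt_mk]; omega)
      omega
    · have hp : p - 1 < m := by omega
      have ep : (oneLine (Fmap a)).getD p 0 = ((Ffun a (Fin.succ ⟨p - 1, hp⟩) : ℕ) : ℤ) + 1 := by
        conv_lhs => rw [show p = (p - 1) + 1 by omega]
        rw [oneLine_getD_succ _ hp, Fmap_apply]
      refine ⟨p - 1, q - 1, r - 1, by omega, by omega, by rw [Wword_length]; omega, ?_, ?_⟩
      · apply (keyCmp a (show (⟨q - 1, hq1⟩ : Fin m) < ⟨r - 1, hr1⟩ by simp only [Fin.mk_lt_mk]; omega)).mpr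
        rw [eq, er] at h1
        omega
      · apply (keyCmp a (show (⟨p - 1, hp⟩ : Fin m) < ⟨q - 1, hq1⟩ by simp only [Fin.mk_lt_mk]; omega)).mpr
        rw [ep, eq] at h2
        omega

lemma avoids_transfer {m : ℕ} (a : Arrangement m 2) :
    Avoids (pfWord a) [3, 2, 1] ↔ Avoids (oneLine (Fmap a)) [3, 2, 1] := by
  unfold Avoids
  rw [pfWord_eq, contains_posReduce, contains_Wword_iff]

lemma length_filter_range (N : ℕ) (p : ℕ → Prop) [DecidablePred p] :
    ((List.range N).filter fun i => decide (p i)).length = ((Finset.range N).filter p).card := by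
  induction N with
  | zero => simp
  | succ N ih =>
    rw [List.range_succ, List.filter_append, List.length_append, Finset.range_add_one,
      Finset.filter_insert]
    by_cases hp : p N
    · rw [if_pos hp, Finset.card_insert_of_notMem (by simp), ← ih]
      simp [hp]
    · rw [if_neg hp, ← ih]
      simp [hp]

lemma peakNum_transfer {m : ℕ} (a : Arrangement m 2)
    (hA : ¬ Contains (oneLine (Fmap a)) [3, 2, 1]) :
    peakNum (oneLine (Fmap a)) = desNum (Wword a) := by
  unfold peakNum desNum desSet
  rw [oneLine_length, Wword_length, length_filter_range]
  congr 1
  ext i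
  simp only [Finset.mem_filter, Finset.mem_range]
  constructor
  · rintro ⟨hi, hpos, hi1, hasc, hdes⟩
    have hi1m : i - 1 < m := by omega
    have him : i < m := by omega
    have eI : (oneLine (Fmap a)).getD i 0 = ((Ffun a (Fin.succ ⟨i - 1, hi1m⟩) : ℕ) : ℤ) + 1 := by
      conv_lhs => rw [show i = (i - 1) + 1 by omega]
      rw [oneLine_getD_succ _ hi1m, Fmap_apply]
    have eI1 : (oneLine (Fmap a)).getD (i + 1) 0 =
        ((Ffun a (Fin.succ ⟨i, him⟩) : ℕ) : ℤ) + 1 := by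
      rw [oneLine_getD_succ _ him, Fmap_apply]
    refine ⟨him, by omega, ?_⟩
    apply (keyCmp a (show (⟨i - 1, hi1m⟩ : Fin m) < ⟨i, him⟩ by
      simp only [Fin.mk_lt_mk]; omega)).mpr
    rw [eI, eI1] at hdes
    omega
  · rintro ⟨him, hpos, hdes⟩
    have hi1m : i - 1 < m := by omega
    have eI : (oneLine (Fmap a)).getD i 0 = ((Ffun a (Fin.succ ⟨i - 1, hi1m⟩) : ℕ) : ℤ) + 1 := by
      conv_lhs => rw [show i = (i - 1) + 1 by omega]
      rw [oneLine_getD_succ _ hi1m, Fmap_apply]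
    have eI1 : (oneLine (Fmap a)).getD (i + 1) 0 =
        ((Ffun a (Fin.succ ⟨i, him⟩) : ℕ) : ℤ) + 1 := by
      rw [oneLine_getD_succ _ him, Fmap_apply]
    have hW := (keyCmp a (show (⟨i - 1, hi1m⟩ : Fin m) < ⟨i, him⟩ by
      simp only [Fin.mk_lt_mk]; omega)).mp hdes
    have hdesOL : (oneLine (Fmap a)).getD (i + 1) 0 < (oneLine (Fmap a)).getD i 0 := by
      rw [eI, eI1]
      omega
    refine ⟨by omega, by omega, by omega, ?_, hdesOL⟩
    by_contra hcon
    push_neg at hcon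
    have hne : (oneLine (Fmap a)).getD i 0 ≠ (oneLine (Fmap a)).getD (i - 1) 0 := by
      rw [oneLine_getD _ (show i - 1 < m + 1 by omega), oneLine_getD _ (show i < m + 1 by omega)]
      intro hcontra
      have heq : (Fmap a) ⟨i, by omega⟩ = (Fmap a) ⟨i - 1, by omega⟩ := by
        apply Fin.ext
        omega
      have := (Fmap a).injective heq
      rw [Fin.mk.injEq] at this
      omega
    have hlt : (oneLine (Fmap a)).getD i 0 < (oneLine (Fmap a)).getD (i - 1) 0 := by
      rcases lt_or_eq_of_le hcon with h | h
      · exact h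
      · exact absurd h hne
    have h321 : Contains (oneLine (Fmap a)) [3, 2, 1] := by
      rw [contains321_iff]
      exact ⟨i - 1, i, i + 1, by omega, by omega, by rw [oneLine_length]; omega, hdesOL, hlt⟩
    exact hA h321

lemma des_transfer {m : ℕ} (a : Arrangement m 2)
    (hA : Avoids (pfWord a) [3, 2, 1]) :
    des a = peakNum (oneLine (Fmap a)) := by
  have hA' : ¬ Contains (oneLine (Fmap a)) [3, 2, 1] := by
    rw [← contains_Wword_iff, ← contains_posReduce, ← pfWord_eq]
    exact hA
  rw [peakNum_transfer a hA']
  show desNum (pfWord a) = _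
  rw [pfWord_eq, desNum_posReduce]

/-! ### The inverse map -/

noncomputable def tG {m : ℕ} (σ : Equiv.Perm (Fin (m + 1))) : ℕ := (σ 0 : ℕ)

noncomputable def TG {m : ℕ} (σ : Equiv.Perm (Fin (m + 1))) : Finset (Fin m) :=
  Finset.univ.filter fun i => (σ i.succ : ℕ) < tG σ

noncomputable def SG {m : ℕ} (σ : Equiv.Perm (Fin (m + 1))) : Finset (Fin m) := (TG σ)ᶜ

lemma mem_TG_iff {m : ℕ} (σ : Equiv.Perm (Fin (m + 1))) (i : Fin m) :
    i ∈ TG σ ↔ (σ i.succ : ℕ) < tG σ := by simp [TG]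

lemma tG_le {m : ℕ} (σ : Equiv.Perm (Fin (m + 1))) : tG σ ≤ m := by
  have := (σ 0).2; unfold tG; omega

lemma ge_of_not_memTG {m : ℕ} (σ : Equiv.Perm (Fin (m + 1))) {i : Fin m}
    (hi : i ∉ TG σ) : tG σ + 1 ≤ (σ i.succ : ℕ) := by
  rw [mem_TG_iff] at hi
  have hne : σ i.succ ≠ σ 0 := fun h => Fin.succ_ne_zero i (σ.injective h)
  have hvne : (σ i.succ : ℕ) ≠ (σ 0 : ℕ) := fun h => hne (Fin.ext h)
  unfold tG at *
  omega

lemma cardTG {m : ℕ} (σ : Equiv.Perm (Fin (m + 1))) : (TG σ).card = tG σ := by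
  have hbij : (TG σ).card = (Finset.univ.filter fun v : Fin (m + 1) => (v : ℕ) < tG σ).card := by
    apply Finset.card_bij (fun i _ => σ i.succ)
    · intro i hi
      rw [mem_TG_iff] at hi
      simp only [Finset.mem_filter, Finset.mem_univ, true_and]
      exact hi
    · intro i _ j _ h
      exact Fin.succ_injective _ (σ.injective h)
    · intro v hv
      simp only [Finset.mem_filter, Finset.mem_univ, true_and] at hv
      have hx0 : σ.symm v ≠ 0 := by
        intro h
        have : v = σ 0 := by rw [← h, Equiv.apply_symm_apply]
        rw [this] at hv
        exact absurd hv (by unfold tG; omega)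
      refine ⟨(σ.symm v).pred hx0, ?_, ?_⟩
      · rw [mem_TG_iff, Fin.succ_pred, Equiv.apply_symm_apply]
        exact hv
      · rw [Fin.succ_pred, Equiv.apply_symm_apply]
  rw [hbij]
  have : (Finset.univ.filter fun v : Fin (m + 1) => (v : ℕ) < tG σ) = Finset.Iio (σ 0) := by
    ext v
    simp only [Finset.mem_filter, Finset.mem_univ, true_and, Finset.mem_Iio, Fin.lt_def, tG]
    simp
  rw [this, Fin.card_Iio]
  rfl

lemma SGcard {m : ℕ} (σ : Equiv.Perm (Fin (m + 1))) : (SG σ).card = m - tG σ := by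
  simp [SG, Finset.card_compl, cardTG]

/-- The base permutation of the inverse arrangement, as a function. -/
noncomputable def Gpi {m : ℕ} (σ : Equiv.Perm (Fin (m + 1))) : Fin m → Fin m := fun i =>
  if h : i ∈ TG σ then i
  else (((SG σ).orderIsoOfFin rfl ⟨(σ i.succ : ℕ) - tG σ - 1, by
    have h1 := ge_of_not_memTG σ h
    have h2 := (σ i.succ).2
    have h3 := SGcard σ
    omega⟩ : ↥(SG σ)) : Fin m)

lemma Gpi_mem_SG {m : ℕ} (σ : Equiv.Perm (Fin (m + 1))) {i : Fin m} (hi : i ∉ TG σ) :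
    Gpi σ i ∈ SG σ := by
  rw [Gpi, dif_neg hi]
  exact Finset.coe_mem _

lemma Gpi_injective {m : ℕ} (σ : Equiv.Perm (Fin (m + 1))) : Function.Injective (Gpi σ) := by
  intro x y h
  unfold Gpi at h
  by_cases hx : x ∈ TG σ <;> by_cases hy : y ∈ TG σ
  · rwa [dif_pos hx, dif_pos hy] at h
  · exfalso
    rw [dif_pos hx, dif_neg hy] at h
    have hmem : x ∈ SG σ := by rw [h]; exact Finset.coe_mem _
    rw [SG, Finset.mem_compl] at hmem
    exact hmem hx
  · exfalso
    rw [dif_neg hx, dif_pos hy] at h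
    have hmem : y ∈ SG σ := by rw [← h]; exact Finset.coe_mem _
    rw [SG, Finset.mem_compl] at hmem
    exact hmem hy
  · rw [dif_neg hx, dif_neg hy] at h
    have h2 := ((SG σ).orderIsoOfFin rfl).injective (Subtype.ext h)
    rw [Fin.mk.injEq] at h2
    have hgx := ge_of_not_memTG σ hx
    have hgy := ge_of_not_memTG σ hy
    have : σ x.succ = σ y.succ := Fin.ext (by omega)
    exact Fin.succ_injective _ (σ.injective this)

/-- The inverse arrangement. -/
noncomputable def Gmap {m : ℕ} (σ : Equiv.Perm (Fin (m + 1))) : Arrangement m 2 :=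
  ⟨(Equiv.ofBijective (Gpi σ) (Finite.injective_iff_bijective.mp (Gpi_injective σ)),
    fun i => if Gpi σ i = i ∧ i ∉ TG σ then 1 else 0), by
    intro j hj
    have hj' : Gpi σ j ≠ j := hj
    have h0 : (if Gpi σ j = j ∧ j ∉ TG σ then (1 : Fin 2) else 0) = (0 : Fin 2) := by
      rw [if_neg]
      rintro ⟨h1, _⟩
      exact hj' h1
    show ((if Gpi σ j = j ∧ j ∉ TG σ then (1 : Fin 2) else 0) : Fin 2).val = 0
    rw [h0]
    rfl⟩

lemma Gmap_pi {m : ℕ} (σ : Equiv.Perm (Fin (m + 1))) (i : Fin m) :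
    (Gmap σ).1.1 i = Gpi σ i := rfl

lemma Gmap_phi {m : ℕ} (σ : Equiv.Perm (Fin (m + 1))) (i : Fin m) :
    (Gmap σ).1.2 i = if Gpi σ i = i ∧ i ∉ TG σ then 1 else 0 := rfl

/-! ### Transport lemmas for `orderIsoOfFin` -/

lemma coe_orderIsoOfFin_congr {m : ℕ} {S1 S2 : Finset (Fin m)} (h : S1 = S2)
    {v1 v2 : ℕ} (hv : v1 = v2) (h1 : v1 < S1.card) (h2 : v2 < S2.card) :
    ((S1.orderIsoOfFin rfl ⟨v1, h1⟩ : ↥S1) : Fin m) =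
      ((S2.orderIsoOfFin rfl ⟨v2, h2⟩ : ↥S2) : Fin m) := by
  subst h; subst hv; rfl

lemma coe_symm_orderIsoOfFin_congr {m : ℕ} {S1 S2 : Finset (Fin m)} (h : S1 = S2)
    {x : Fin m} (h1 : x ∈ S1) (h2 : x ∈ S2) :
    (((S1.orderIsoOfFin rfl).symm ⟨x, h1⟩ : Fin S1.card) : ℕ) =
      (((S2.orderIsoOfFin rfl).symm ⟨x, h2⟩ : Fin S2.card) : ℕ) := by
  subst h; rfl

/-! ### `Gmap` is a left inverse of `Fmap` -/

lemma tG_Fmap {m : ℕ} (a : Arrangement m 2) : tG (Fmap a) = tOf a := Ffun_zero a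

lemma TG_Fmap {m : ℕ} (a : Arrangement m 2) : TG (Fmap a) = Tset a := by
  ext i
  rw [mem_TG_iff, tG_Fmap]
  exact Ffun_succ_lt_iff a i

lemma SG_Fmap {m : ℕ} (a : Arrangement m 2) : SG (Fmap a) = Sset a := by
  rw [SG, TG_Fmap]; rfl

lemma Gpi_Fmap {m : ℕ} (a : Arrangement m 2) (i : Fin m) : Gpi (Fmap a) i = a.1.1 i := by
  by_cases hi : i ∈ Tset a
  · rw [Gpi, dif_pos (by rw [TG_Fmap]; exact hi)]
    exact ((mem_Tset_iff a i).mp hi).1.symm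
  · have hmem : a.1.1 i ∈ Sset a := pi_mem_Sset a (Finset.mem_compl.mpr hi)
    rw [Gpi, dif_neg (by rw [TG_Fmap]; exact hi)]
    have hF : ((Fmap a) i.succ : ℕ) =
        tOf a + 1 + (rkS a (a.1.1 i) hmem : ℕ) := Ffun_succ_not_mem a hi
    have hv : ((Fmap a) i.succ : ℕ) - tG (Fmap a) - 1 = (rkS a (a.1.1 i) hmem : ℕ) := by
      rw [tG_Fmap]; omega
    have key := coe_orderIsoOfFin_congr (SG_Fmap a) hv
      (by rw [hv, SG_Fmap]; exact (rkS a (a.1.1 i) hmem).isLt)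
      ((rkS a (a.1.1 i) hmem).isLt)
    rw [key, Fin.eta, rkS, OrderIso.apply_symm_apply]

lemma GF {m : ℕ} (a : Arrangement m 2) : Gmap (Fmap a) = a := by
  apply Subtype.ext
  apply Prod.ext
  · apply Equiv.ext
    intro i
    show Gpi (Fmap a) i = a.1.1 i
    exact Gpi_Fmap a i
  · funext i
    show (if Gpi (Fmap a) i = i ∧ i ∉ TG (Fmap a) then (1 : Fin 2) else 0) = a.1.2 i
    rw [Gpi_Fmap a i, TG_Fmap]
    by_cases h1 : a.1.1 i = i
    · by_cases h2 : i ∈ Tset a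
      · rw [if_neg (by rintro ⟨_, hc⟩; exact hc h2)]
        exact (((mem_Tset_iff a i).mp h2).2).symm
      · rw [if_pos ⟨h1, h2⟩]
        have hne : a.1.2 i ≠ 0 := fun h0 => h2 ((mem_Tset_iff a i).mpr ⟨h1, h0⟩)
        have hvne : (a.1.2 i : ℕ) ≠ 0 := by
          intro hv
          apply hne
          apply Fin.ext
          simpa using hv
        have hlt := (a.1.2 i).2
        symm
        apply Fin.ext
        simp only [Fin.val_one]
        omega
    · rw [if_neg (by rintro ⟨hc, _⟩; exact h1 hc)]
      have h0 := a.2 i h1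
      symm
      apply Fin.ext
      simpa using h0

/-! ### `Gmap` is a right inverse of `Fmap` on 321-avoiding permutations -/

lemma Tset_Gmap {m : ℕ} (σ : Equiv.Perm (Fin (m + 1))) : Tset (Gmap σ) = TG σ := by
  ext i
  rw [mem_Tset_iff]
  constructor
  · rintro ⟨h1, h2⟩
    rw [Gmap_phi] at h2
    by_contra hc
    rw [Gmap_pi] at h1
    rw [if_pos ⟨h1, hc⟩] at h2
    exact absurd h2 (by decide)
  · intro hi
    refine ⟨by rw [Gmap_pi, Gpi, dif_pos hi], ?_⟩
    rw [Gmap_phi, if_neg (by rintro ⟨_, hc⟩; exact hc hi)]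

lemma tOf_Gmap {m : ℕ} (σ : Equiv.Perm (Fin (m + 1))) : tOf (Gmap σ) = tG σ := by
  rw [tOf, Tset_Gmap, cardTG]

lemma Sset_Gmap {m : ℕ} (σ : Equiv.Perm (Fin (m + 1))) : Sset (Gmap σ) = SG σ := by
  rw [Sset, Tset_Gmap]; rfl

lemma card_filter_lt {m : ℕ} (σ : Equiv.Perm (Fin (m + 1))) :
    (Finset.univ.filter fun v : Fin (m + 1) => (v : ℕ) < tG σ).card = tG σ := by
  have h : (Finset.univ.filter fun v : Fin (m + 1) => (v : ℕ) < tG σ) = Finset.Iio (σ 0) := by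
    ext v
    simp only [Finset.mem_filter, Finset.mem_univ, true_and, Finset.mem_Iio, Fin.lt_def, tG]
    simp
  rw [h, Fin.card_Iio]
  rfl

lemma sigma_succ_mono {m : ℕ} (σ : Equiv.Perm (Fin (m + 1)))
    (hA : ¬ Contains (oneLine σ) [3, 2, 1]) {i j : Fin m} (hi : i ∈ TG σ) (hj : j ∈ TG σ)
    (hij : i < j) : (σ i.succ : ℕ) < (σ j.succ : ℕ) := by
  by_contra hc
  push_neg at hc
  have hne : σ i.succ ≠ σ j.succ := by
    intro h
    have := Fin.succ_injective _ (σ.injective h)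
    exact absurd this (Fin.ne_of_lt hij)
  have hvne : (σ i.succ : ℕ) ≠ (σ j.succ : ℕ) := fun h => hne (Fin.ext h)
  have hlt : (σ j.succ : ℕ) < (σ i.succ : ℕ) := by omega
  apply hA
  rw [contains321_iff]
  rw [mem_TG_iff] at hi hj
  have hij' : (i : ℕ) < (j : ℕ) := hij
  refine ⟨0, (i : ℕ) + 1, (j : ℕ) + 1, by omega, by omega, by rw [oneLine_length]; omega,
    ?_, ?_⟩
  · rw [oneLine_getD_succ σ i.isLt, oneLine_getD_succ σ j.isLt]
    simp only [Fin.eta]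
    omega
  · rw [oneLine_getD_succ σ i.isLt, oneLine_getD σ (show 0 < m + 1 by omega)]
    simp only [Fin.eta, Fin.mk_zero]
    unfold tG at hi
    omega

lemma rkT_val_Gmap {m : ℕ} (σ : Equiv.Perm (Fin (m + 1)))
    (hA : ¬ Contains (oneLine σ) [3, 2, 1]) {i : Fin m} (hi : i ∈ TG σ) :
    ((((TG σ).orderIsoOfFin rfl).symm ⟨i, hi⟩ : Fin (TG σ).card) : ℕ) = (σ i.succ : ℕ) := by
  have hct : (TG σ).card = tG σ := cardTG σ
  have htle := tG_le σ
  have hVc : (Finset.univ.filter fun v : Fin (m + 1) => (v : ℕ) < tG σ).card = (TG σ).card := by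
    rw [card_filter_lt σ, hct]
  have e1 : (fun r : Fin (TG σ).card => σ ((TG σ).orderEmbOfFin rfl r).succ) =
      (Finset.univ.filter fun v : Fin (m + 1) => (v : ℕ) < tG σ).orderEmbOfFin hVc := by
    apply Finset.orderEmbOfFin_unique
    · intro r
      have hmemT : (TG σ).orderEmbOfFin rfl r ∈ TG σ := Finset.orderEmbOfFin_mem _ _ _
      rw [mem_TG_iff] at hmemT
      simp only [Finset.mem_filter, Finset.mem_univ, true_and]
      exact hmemT
    · intro r r' hrr
      have h1 : (TG σ).orderEmbOfFin rfl r < (TG σ).orderEmbOfFin rfl r' :=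
        ((TG σ).orderEmbOfFin rfl).strictMono hrr
      have := sigma_succ_mono σ hA (Finset.orderEmbOfFin_mem _ _ _)
        (Finset.orderEmbOfFin_mem _ _ _) h1
      rw [Fin.lt_def]
      exact this
  have e2 : (fun r : Fin (TG σ).card => (⟨(r : ℕ), by have := r.isLt; omega⟩ : Fin (m + 1))) =
      (Finset.univ.filter fun v : Fin (m + 1) => (v : ℕ) < tG σ).orderEmbOfFin hVc := by
    apply Finset.orderEmbOfFin_unique
    · intro r
      simp only [Finset.mem_filter, Finset.mem_univ, true_and]
      have := r.isLt
      omega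
    · intro r r' hrr
      rw [Fin.mk_lt_mk]
      exact hrr
  have hid := congrFun (e1.trans e2.symm) (((TG σ).orderIsoOfFin rfl).symm ⟨i, hi⟩)
  have happ : (TG σ).orderEmbOfFin rfl (((TG σ).orderIsoOfFin rfl).symm ⟨i, hi⟩) = i := by
    rw [← Finset.coe_orderIsoOfFin_apply, OrderIso.apply_symm_apply]
  rw [happ] at hid
  have := congrArg Fin.val hid
  simpa using this.symm

lemma FG {m : ℕ} (σ : Equiv.Perm (Fin (m + 1)))
    (hA : ¬ Contains (oneLine σ) [3, 2, 1]) : Fmap (Gmap σ) = σ := by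
  apply Equiv.ext
  intro x
  show Ffun (Gmap σ) x = σ x
  apply Fin.ext
  rcases Fin.eq_zero_or_eq_succ x with rfl | ⟨i, rfl⟩
  · rw [Ffun_zero, tOf_Gmap]
    rfl
  · by_cases hi : i ∈ TG σ
    · have hi' : i ∈ Tset (Gmap σ) := by rw [Tset_Gmap]; exact hi
      rw [Ffun_succ_mem _ hi', rkT,
        coe_symm_orderIsoOfFin_congr (Tset_Gmap σ) hi' hi]
      exact rkT_val_Gmap σ hA hi
    · have hi' : i ∉ Tset (Gmap σ) := by rw [Tset_Gmap]; exact hi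
      rw [Ffun_succ_not_mem _ hi']
      have hmem2 : Gpi σ i ∈ SG σ := Gpi_mem_SG σ hi
      have hge := ge_of_not_memTG σ hi
      have hb : (σ i.succ : ℕ) - tG σ - 1 < (SG σ).card := by
        have := (σ i.succ).isLt
        have := SGcard σ
        omega
      have hval : (rkS (Gmap σ) ((Gmap σ).1.1 i)
          (pi_mem_Sset _ (Finset.mem_compl.mpr hi')) : ℕ) = (σ i.succ : ℕ) - tG σ - 1 := by
        rw [rkS, coe_symm_orderIsoOfFin_congr (Sset_Gmap σ) _ (by
          rw [Gmap_pi]; exact hmem2)]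
        have heq : (⟨(Gmap σ).1.1 i, by rw [Gmap_pi]; exact hmem2⟩ : ↥(SG σ)) =
            (SG σ).orderIsoOfFin rfl ⟨(σ i.succ : ℕ) - tG σ - 1, hb⟩ := by
          apply Subtype.ext
          show (Gmap σ).1.1 i = _
          rw [Gmap_pi, Gpi, dif_neg hi]
        rw [heq, OrderIso.symm_apply_apply]
      rw [hval, tOf_Gmap]
      have := (σ i.succ).isLt
      omega

theorem stmt12 (n k : ℕ) (hn : 2 ≤ n) :
    Nat.card {a : Arrangement (n - 1) 2 // Avoids (pfWord a) [3, 2, 1] ∧ des a = k} =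
    Nat.card {π : Equiv.Perm (Fin n) //
      Avoids (oneLine π) [3, 2, 1] ∧ peakNum (oneLine π) = k} := by
  obtain ⟨m, rfl⟩ : ∃ m, n = m + 1 := ⟨n - 1, by omega⟩
  have hsub : m + 1 - 1 = m := rfl
  apply Nat.card_congr
  refine
    { toFun := fun x => ⟨Fmap x.1, (avoids_transfer x.1).mp x.2.1,
        by rw [← des_transfer x.1 x.2.1]; exact x.2.2⟩
      invFun := fun y => ⟨Gmap y.1, ?_⟩
      left_inv := fun x => Subtype.ext (GF x.1)
      right_inv := fun y => Subtype.ext (FG y.1 y.2.1) }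
  have hFG : Fmap (Gmap y.1) = y.1 := FG y.1 y.2.1
  have hAv : Avoids (pfWord (Gmap y.1)) [3, 2, 1] := by
    rw [avoids_transfer (Gmap y.1), hFG]
    exact y.2.1
  refine ⟨hAv, ?_⟩
  rw [des_transfer (Gmap y.1) hAv, hFG]
  exact y.2.2

end KArr
end

section
/- Every permutation π of [n] with exactly one descent has exactly one crossing descent; that is, if des(π) = 1 then xdes(π) = 1. -/
open scoped Classical

namespace KArr

theorem stmt18 (n : ℕ) (π : Equiv.Perm (Fin n)) (h : desNum (oneLine π) = 1) :
    xdesNum π = 1 := by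
  classical
  set f : ℕ → ℕ := fun j => if hj : j < n then (π ⟨j, hj⟩ : ℕ) else 0 with hf
  have hfval : ∀ j (hj : j < n), f j = (π ⟨j, hj⟩ : ℕ) := fun j hj => dif_pos hj
  have hflt : ∀ j, j < n → f j < n := by
    intro j hj; rw [hfval j hj]; exact (π ⟨j, hj⟩).isLt
  have hfinj : ∀ j₁ j₂, j₁ < n → j₂ < n → f j₁ = f j₂ → j₁ = j₂ := by
    intro j₁ j₂ h1 h2 he
    rw [hfval j₁ h1, hfval j₂ h2] at he
    have := π.injective (Fin.ext he)
    simpa using congrArg Fin.val this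
  have hlen : (oneLine π).length = n := by simp [oneLine]
  have hget : ∀ j, j < n → (oneLine π).getD j 0 = (f j : ℤ) + 1 := by
    intro j hj
    rw [List.getD_eq_getElem _ _ (by rw [hlen]; exact hj)]
    simp [oneLine, hfval j hj]
  have hmem : ∀ i, i ∈ desSet (oneLine π) ↔ (i < n ∧ 1 ≤ i ∧ f i < f (i - 1)) := by
    intro i
    simp only [desSet, Finset.mem_filter, Finset.mem_range, hlen]
    constructor
    · rintro ⟨h1, h2, h3⟩
      rw [hget i h1, hget (i - 1) (by omega)] at h3
      exact ⟨h1, h2, by omega⟩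
    · rintro ⟨h1, h2, h3⟩
      refine ⟨h1, h2, ?_⟩
      rw [hget i h1, hget (i - 1) (by omega)]
      omega
  unfold desNum at h
  obtain ⟨d, hd⟩ := Finset.card_eq_one.mp h
  obtain ⟨hdn, hd1le, hddesc⟩ := (hmem d).mp (hd ▸ Finset.mem_singleton_self d)
  have huniq : ∀ i, i < n → 1 ≤ i → f i < f (i - 1) → i = d := by
    intro i h1 h2 h3
    have : i ∈ desSet (oneLine π) := (hmem i).mpr ⟨h1, h2, h3⟩
    rw [hd, Finset.mem_singleton] at this; exact this
  have hnd : ∀ j, 1 ≤ j → j < n → j ≠ d → f (j - 1) < f j := by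
    intro j h1 h2 h3
    have hle : ¬ f j < f (j - 1) := fun hc => h3 (huniq j h2 h1 hc)
    have hne : f (j - 1) ≠ f j := fun he => by
      have := hfinj _ _ (by omega) h2 he; omega
    omega
  have chain : ∀ b, b < n → ∀ a, a ≤ b → (∀ j, a < j → j ≤ b → j ≠ d) → f a ≤ f b := by
    intro b
    induction b with
    | zero =>
      intro _ a ha _
      have : a = 0 := by omega
      subst this; exact le_rfl
    | succ b ih =>
      intro hb a ha hj
      rcases eq_or_lt_of_le ha with h' | h'
      · rw [h']
      · have hab : a ≤ b := by omega
        have step : f b < f (b + 1) := by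
          have := hnd (b + 1) (by omega) hb (hj (b + 1) (by omega) le_rfl)
          simpa using this
        exact le_trans (ih (by omega) a hab (fun j hj1 hj2 => hj j hj1 (by omega)))
          (le_of_lt step)
  have hd1 : d ≤ f (d - 1) := by
    have hsub : ∀ j ∈ Finset.range (d + 1), f j ∈ Finset.range (f (d - 1) + 1) := by
      intro j hjm
      rw [Finset.mem_range] at hjm ⊢
      rcases eq_or_lt_of_le (Nat.lt_succ_iff.mp hjm) with he | hl
      · subst he; omega
      · have : f j ≤ f (d - 1) :=
          chain (d - 1) (by omega) j (by omega) (fun k hk1 hk2 => by omega)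
        omega
    have hinj : Set.InjOn f (Finset.range (d + 1)) := by
      intro x hx y hy he
      rw [Finset.mem_coe, Finset.mem_range] at hx hy
      exact hfinj x y (by omega) (by omega) he
    have := Finset.card_le_card_of_injOn f hsub hinj
    simpa using this
  have hd2 : f d ≤ d := by
    have hsub : ∀ j ∈ Finset.Ico (d - 1) n, f j ∈ Finset.Ico (f d) n := by
      intro j hjm
      rw [Finset.mem_Ico] at hjm ⊢
      refine ⟨?_, hflt j hjm.2⟩
      rcases eq_or_lt_of_le hjm.1 with he | hl
      · rw [← he]; omega
      · exact chain j hjm.2 d (by omega) (fun k hk1 hk2 => by omega)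
    have hinj : Set.InjOn f (Finset.Ico (d - 1) n) := by
      intro x hx y hy he
      rw [Finset.mem_coe, Finset.mem_Ico] at hx hy
      exact hfinj x y hx.2 hy.2 he
    have hcard := Finset.card_le_card_of_injOn f hsub hinj
    rw [Nat.card_Ico, Nat.card_Ico] at hcard
    have := hflt d hdn
    omega
  have key : ∀ i, i < n →
      ((1 ≤ i ∧ (i : ℤ) + 1 ≤ (oneLine π).getD (i - 1) 0 ∧
        (oneLine π).getD i 0 ≤ (i : ℤ) + 1) ↔ i = d) := by
    intro i hi
    rw [hget i hi, hget (i - 1) (by omega)]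
    constructor
    · rintro ⟨h1, h2, h3⟩
      have h2' : i ≤ f (i - 1) := by omega
      have h3' : f i ≤ i := by omega
      have hne : f i ≠ f (i - 1) := fun he => by
        have := hfinj _ _ hi (by omega) he; omega
      exact huniq i hi h1 (by omega)
    · rintro rfl
      exact ⟨hd1le, by omega, by omega⟩
  have hfilter : (List.range n).filter (fun i : ℕ => decide (1 ≤ i ∧
      (i : ℤ) + 1 ≤ (oneLine π).getD (i - 1) 0 ∧ (oneLine π).getD i 0 ≤ (i : ℤ) + 1)) =
      (List.range n).filter (· == d) := by
    apply List.filter_congr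
    intro i hi
    rw [List.mem_range] at hi
    rw [Bool.eq_iff_iff]
    simp only [decide_eq_true_eq, beq_iff_eq]
    exact key i hi
  have hx : xdesNum π = ((List.range n).filter (· == d)).length := by
    unfold xdesNum xdesW
    rw [hlen, hfilter]
  rw [hx, ← List.countP_eq_length_filter]
  exact List.count_eq_one_of_mem List.nodup_range (List.mem_range.mpr hdn)

end KArr
end
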